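/- K ⊨_l ¬enc(P) over all finite paths of K if and only if K_ι ⊨_l ¬enc_ι(P) over all infinite paths of K_ι. -/

import Mathlib

set_option autoImplicit true

section IFCIL

variable {N O S A Pr : Type}

/-- Node patterns: a concrete node or the wildcard `*`. -/
inductive NodePat (N : Type) where
  | star : NodePat N
  | node : N → NodePat N

/-- An arc of an information flow diagram: source, nonempty set of operations, target. -/
abbrev Arc (N O : Type) := N × Set O × N

/-- An information flow diagram `I = (N, ta, E)`. -/
structure IFD (N O : Type) where
  ta : N → Set N
  E : Set (Arc N O)

/-- A node pattern `m` matches a node `n`: `m = *` or `n ∈ ta(m)`. -/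
def NodePat.mat (I : IFD N O) : NodePat N → N → Prop
  | .star, _ => True
  | .node m, n => n ∈ I.ta m

/-- Consecutive arcs have matching endpoints. -/
def Chained : List (Arc N O) → Prop
  | [] => True
  | [_] => True
  | a :: b :: rest => a.2.2 = b.1 ∧ Chained (b :: rest)

/-- A path in `I`: nonempty, chained sequence of arcs of `I`. -/
def PathIn (I : IFD N O) (π : List (Arc N O)) : Prop :=
  π ≠ [] ∧ Chained π ∧ ∀ a ∈ π, a ∈ I.E

/-- Arrows: single step `>` or multi step `+>`. -/
inductive Arrow where
  | single : Arrow
  | multi : Arrow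

/-- Path kinds `P ::= n [o]> n' | n +[o]> n' | P₁ P₂`. -/
inductive Kind (N O : Type) where
  | atom : NodePat N → Arrow → Set O → NodePat N → Kind N O
  | comp : Kind N O → Kind N O → Kind N O

/-- The kind satisfaction relation `π ▷_I P`. -/
inductive KSat (I : IFD N O) : List (Arc N O) → Kind N O → Prop where
  | step : NodePat.mat I m n → NodePat.mat I m' n' → (o ∩ o').Nonempty →
      KSat I [(n, o, n')] (.atom m .single o' m')
  | plusBase : KSat I [(n, o, n')] (.atom m .single o' m') →
      KSat I [(n, o, n')] (.atom m .multi o' m')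
  | plusStep : KSat I [(n, o, n')] (.atom m .single o' .star) →
      KSat I π (.atom .star .multi o' m') →
      KSat I ((n, o, n') :: π) (.atom m .multi o' m')
  | comp : KSat I π₁ P₁ → KSat I π₂ P₂ → KSat I (π₁ ++ π₂) (.comp P₁ P₂)

/-- Node refinement: `n ⪯_n n` and `n ⪯_n *`. -/
def NRef : NodePat N → NodePat N → Prop := fun a b => a = b ∨ b = .star

/-- Arrow refinement: reflexivity and `> ⪯_a +>`. -/
inductive ARef : Arrow → Arrow → Prop where
  | refl (a) : ARef a a
  | up : ARef .single .multi

/-- Kind refinement `⪯_P`: rules (comp), (P-1)–(P-4), closed under reflexivity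
and transitivity. -/
inductive KRef : Kind N O → Kind N O → Prop where
  | refl (P) : KRef P P
  | trans : KRef P Q → KRef Q R → KRef P R
  | comp : KRef P₁ P₁' → KRef P₂ P₂' → KRef (.comp P₁ P₂) (.comp P₁' P₂')
  | atom : NRef n₁ n₁' → NRef n₂ n₂' → ARef w w' → o ⊆ o' →
      KRef (.atom n₁ w o n₂) (.atom n₁' w' o' n₂')
  | p2 : NRef n₁ n₁' → NRef n₂ n₂' → o₁ ⊆ o₁' → o₁ ⊆ o₂' → o₂ ⊆ o₂' →
      KRef (.comp (.atom n₁ .multi o₁ .star) (.atom .star .single o₂ n₂))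
           (.comp (.atom n₁' .single o₁' .star) (.atom .star .multi o₂' n₂'))
  | p3 : NRef n₁ n₁' → NRef n₂ n₂' → o₁ ⊆ o' → o₂ ⊆ o' →
      KRef (.comp (.atom n₁ .multi o₁ .star) (.atom .star .multi o₂ n₂))
           (.atom n₁' .multi o' n₂')
  | p4 : NRef n₁ n₁' → NRef n₂ n₂' → o₁ ⊆ o₁' → o₂ ⊆ o₂' → o₂ ⊆ o₁' →
      KRef (.comp (.atom n₁ .single o₁ .star) (.atom .star .multi o₂ n₂))
           (.comp (.atom n₁' .multi o₁' .star) (.atom .star .single o₂' n₂'))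

/-- IFL requirements `R ::= P | ~P | P : P'`. -/
inductive Req (N O : Type) where
  | ex : Kind N O → Req N O
  | no : Kind N O → Req N O
  | constr : Kind N O → Kind N O → Req N O

/-- Validity `I ⊨ R`. -/
def Valid (I : IFD N O) : Req N O → Prop
  | .ex P => ∃ π, PathIn I π ∧ KSat I π P
  | .no P => ¬ ∃ π, PathIn I π ∧ KSat I π P
  | .constr P P' => ∀ π, PathIn I π → KSat I π P → KSat I π P'

/-- Requirement refinement `⪯`: rules (R-1)–(R-3), closed under
reflexivity and transitivity. -/
inductive RRef : Req N O → Req N O → Prop where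
  | refl (R) : RRef R R
  | trans : RRef R₁ R₂ → RRef R₂ R₃ → RRef R₁ R₃
  | ex : KRef P P' → RRef (.ex P) (.ex P')
  | no : KRef P P' → RRef (.no P') (.no P)
  | constr : KRef P₁ P₁' → KRef P₂ P₂' → RRef (.constr P₁' P₂) (.constr P₁ P₂')

/-- The equivalent, right-linear grammar of kinds:
`P ::= n [o]> n' | n +[o]> n' | (n [o]> n') P | (n +[o]> n') P`. -/
inductive LKind (N O : Type) where
  | step : NodePat N → Set O → NodePat N → LKind N O
  | plus : NodePat N → Set O → NodePat N → LKind N O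
  | stepC : NodePat N → Set O → NodePat N → LKind N O → LKind N O
  | plusC : NodePat N → Set O → NodePat N → LKind N O → LKind N O

/-- Kind satisfaction `π ▷_I P` for the right-linear grammar. -/
inductive LSat (I : IFD N O) : List (Arc N O) → LKind N O → Prop where
  | step : NodePat.mat I m n → NodePat.mat I m' n' → (o ∩ o').Nonempty →
      LSat I [(n, o, n')] (.step m o' m')
  | plusBase : LSat I [(n, o, n')] (.step m o' m') →
      LSat I [(n, o, n')] (.plus m o' m')
  | plusStep : LSat I [(n, o, n')] (.step m o' .star) →
      LSat I π (.plus .star o' m') →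
      LSat I ((n, o, n') :: π) (.plus m o' m')
  | stepC : LSat I [(n, o, n')] (.step m o' .star) → LSat I π P →
      LSat I ((n, o, n') :: π) (.stepC m o' m' P)
  | plusCBase : LSat I π (.stepC m o' m' P) → LSat I π (.plusC m o' m' P)
  | plusCStep : LSat I [(n, o, n')] (.step m o' .star) →
      LSat I π (.plusC .star o' .star P) →
      LSat I ((n, o, n') :: π) (.plusC m o' m' P)

/-- LTL formulas over atomic propositions `Pr` and actions `A`;
`acts o` stands for the disjunction `⋁_{op ∈ o} (op)`. -/
inductive LTL (Pr A : Type) where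
  | tt : LTL Pr A
  | atom : Pr → LTL Pr A
  | acts : Set A → LTL Pr A
  | and : LTL Pr A → LTL Pr A → LTL Pr A
  | or : LTL Pr A → LTL Pr A → LTL Pr A
  | not : LTL Pr A → LTL Pr A
  | next : LTL Pr A → LTL Pr A
  | untl : LTL Pr A → LTL Pr A → LTL Pr A

/-- A finite KTS path: a state followed by a list of (action, state) steps. -/
structure FinPath (S A : Type) where
  first : S
  rest : List (A × S)

/-- Drop the first `k` transitions of a finite path. -/
def FinPath.drop : FinPath S A → ℕ → FinPath S A
  | w, 0 => w
  | ⟨s, []⟩, _ + 1 => ⟨s, []⟩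
  | ⟨_, (_, s') :: r⟩, k + 1 => FinPath.drop ⟨s', r⟩ k

/-- Finite-path LTL semantics `w ⊨_l φ` with labeling `L`. -/
def FSat (L : S → Set Pr) : LTL Pr A → FinPath S A → Prop
  | .tt, _ => True
  | .atom p, w => p ∈ L w.first
  | .acts o, w => ∃ a s r, w.rest = (a, s) :: r ∧ a ∈ o
  | .and φ ψ, w => FSat L φ w ∧ FSat L ψ w
  | .or φ ψ, w => FSat L φ w ∨ FSat L ψ w
  | .not φ, w => ¬ FSat L φ w
  | .next φ, w => ∃ a s r, w.rest = (a, s) :: r ∧ FSat L φ ⟨s, r⟩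
  | .untl φ ψ, w => ∃ k, k ≤ w.rest.length ∧ FSat L ψ (w.drop k) ∧
      ∀ j < k, FSat L φ (w.drop j)

/-- The LTL encoding `enc(P)` of flow kinds (finite-path version,
with end marker `¬X(true)`). -/
def encK : LKind N O → LTL (NodePat N) O
  | .step n o n' =>
      .and (.atom n) (.and (.acts o) (.next (.and (.atom n') (.not (.next .tt)))))
  | .plus n o n' =>
      .and (.atom n) (.and (.acts o)
        (.next (.untl (.acts o) (.and (.atom n') (.not (.next .tt))))))
  | .stepC n o _ P => .and (.atom n) (.and (.acts o) (.next (encK P)))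
  | .plusC n o _ P =>
      .and (.atom n) (.and (.acts o) (.next (.untl (.acts o) (encK P))))

/-- The labeling `Λ` of the KTS of `I`: `M ∈ Λ(n)` iff `n ∈ ta(M)`
(with the wildcard true everywhere). -/
def labelOf (I : IFD N O) : N → Set (NodePat N) :=
  fun n => {p | NodePat.mat I p n}

/-- `encRest π r`: the steps `r` traverse the arcs `π` choosing one
operation from each arc's operation set. -/
def encRest : List (Arc N O) → List (O × N) → Prop
  | [], [] => True
  | (_, o, n') :: π, (op, s) :: r => op ∈ o ∧ s = n' ∧ encRest π r
  | _, _ => False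

/-- `w ∈ enc(π)` : the KTS path `w` results from the diagram path `π`
by choosing one operation from each arc's operation set. -/
def encPath (π : List (Arc N O)) (w : FinPath N O) : Prop :=
  match π with
  | [] => False
  | (n, _, _) :: _ => w.first = n ∧ encRest π w.rest

/-- Auxiliary for `π_w`. -/
def diagOf : N → List (O × N) → List (Arc N O)
  | _, [] => []
  | s, (op, s') :: r => (s, ({op} : Set O), s') :: diagOf s' r

/-- `π_w`: the diagram path obtained from a KTS path by replacing each
action `op` with the singleton `{op}`. -/
def FinPath.toDiagram (w : FinPath N O) : List (Arc N O) := diagOf w.first w.rest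

/-- A transition of the KTS of `I`: `E' = {(n, op, n') | (n,o,n') ∈ E, op ∈ o}`. -/
def ktsStep (I : IFD N O) (s : N) (op : O) (s' : N) : Prop :=
  ∃ o, (s, o, s') ∈ I.E ∧ op ∈ o

def ktsRest (I : IFD N O) : N → List (O × N) → Prop
  | _, [] => True
  | s, (op, s') :: r => ktsStep I s op s' ∧ ktsRest I s' r

/-- `w` is a (finite) path of the KTS of `I`. -/
def KTSPath (I : IFD N O) (w : FinPath N O) : Prop := ktsRest I w.first w.rest

/-- `K ⊨_l φ`: every finite path of the KTS of `I` satisfies `φ`. -/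
def KModels (I : IFD N O) (φ : LTL (NodePat N) O) : Prop :=
  ∀ w, KTSPath I w → FSat (labelOf I) φ w

/-- IFL requirements over right-linear kinds. -/
inductive LReq (N O : Type) where
  | ex : LKind N O → LReq N O
  | no : LKind N O → LReq N O
  | constr : LKind N O → LKind N O → LReq N O

/-- Validity `I ⊨ R` for right-linear requirements. -/
def LValid (I : IFD N O) : LReq N O → Prop
  | .ex P => ∃ π, PathIn I π ∧ LSat I π P
  | .no P => ¬ ∃ π, PathIn I π ∧ LSat I π P
  | .constr P P' => ∀ π, PathIn I π → LSat I π P → LSat I π P'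

/-- Satisfaction `K ⊢ R` in the finite-path KTS semantics. -/
def KEnt (I : IFD N O) : LReq N O → Prop
  | .ex P => ¬ KModels I (.not (encK P))
  | .no P => KModels I (.not (encK P))
  | .constr P P' => KModels I (.or (.not (encK P)) (encK P'))

/-- Infinite KTS paths. -/
structure InfPath (S A : Type) where
  state : ℕ → S
  act : ℕ → A

def InfPath.drop (w : InfPath S A) (k : ℕ) : InfPath S A :=
  ⟨fun i => w.state (i + k), fun i => w.act (i + k)⟩

/-- Infinite-path LTL semantics. -/
def ISat (L : S → Set Pr) : LTL Pr A → InfPath S A → Prop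
  | .tt, _ => True
  | .atom p, w => p ∈ L (w.state 0)
  | .acts o, w => w.act 0 ∈ o
  | .and φ ψ, w => ISat L φ w ∧ ISat L ψ w
  | .or φ ψ, w => ISat L φ w ∨ ISat L ψ w
  | .not φ, w => ¬ ISat L φ w
  | .next φ, w => ISat L φ (w.drop 1)
  | .untl φ ψ, w => ∃ k, ISat L ψ (w.drop k) ∧ ∀ j < k, ISat L φ (w.drop j)

/-- Atomic propositions for the sink-extended KTS: node patterns plus
the distinguished proposition `ι`. -/
abbrev SProp (N : Type) := NodePat N ⊕ Unit

/-- Labeling of the sink-extended KTS: the sink (`none`) is labeled only by `ι`. -/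
def labelι (I : IFD N O) : Option N → Set (SProp N)
  | some n => {p | ∃ q, p = Sum.inl q ∧ NodePat.mat I q n}
  | none => {Sum.inr ()}

/-- The encoding `enc_ι(P)` of flow kinds for the sink-extended KTS:
identical to `enc` except that `¬X(true)` is replaced by `X(ι)`. -/
def encι : LKind N O → LTL (SProp N) O
  | .step n o n' =>
      .and (.atom (.inl n)) (.and (.acts o)
        (.next (.and (.atom (.inl n')) (.next (.atom (.inr ()))))))
  | .plus n o n' =>
      .and (.atom (.inl n)) (.and (.acts o)
        (.next (.untl (.acts o) (.and (.atom (.inl n')) (.next (.atom (.inr ())))))))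
  | .stepC n o _ P => .and (.atom (.inl n)) (.and (.acts o) (.next (encι P)))
  | .plusC n o _ P =>
      .and (.atom (.inl n)) (.and (.acts o) (.next (.untl (.acts o) (encι P))))

/-- The states of a finite path. -/
def FinPath.states (w : FinPath S A) : List S := w.first :: w.rest.map Prod.snd

/-- `w·ι^ω`: the finite path `w` followed by the sink forever
(with arbitrary operation labels `ops` into `ι`). -/
def appendSink (w : FinPath N O) (ops : ℕ → O) : InfPath (Option N) O where
  state := fun i => w.states[i]?
  act := fun i => if h : i < w.rest.length then (w.rest.get ⟨i, h⟩).1 else ops i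

/-- Transitions of the sink-extended KTS `K_ι`: the transitions of `K`,
transitions from every state to the sink with every operation, and the
self-loop on the sink. -/
def sinkStep (I : IFD N O) : Option N → O → Option N → Prop
  | some s, op, some s' => ktsStep I s op s'
  | _, _, none => True
  | none, _, some _ => False

/-- `w` is an infinite path of the sink-extended KTS `K_ι`. -/
def KιPath (I : IFD N O) (w : InfPath (Option N) O) : Prop :=
  ∀ i, sinkStep I (w.state i) (w.act i) (w.state (i + 1))

/-- `K_ι ⊨_l φ`: every infinite path of `K_ι` satisfies `φ`. -/
def KιModels (I : IFD N O) (φ : LTL (SProp N) O) : Prop :=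
  ∀ w, KιPath I w → ISat (labelι I) φ w

/-- Satisfaction `K_ι ⊢ R` in the infinite-path, sink-extended semantics. -/
def KιEnt (I : IFD N O) : LReq N O → Prop
  | .ex P => ¬ KιModels I (.not (encι P))
  | .no P => KιModels I (.not (encι P))
  | .constr P P' => KιModels I (.or (.not (encι P)) (encι P'))

/-- The leading node constraint of a kind. -/
def LKind.firstNode : LKind N O → NodePat N
  | .step n _ _ => n
  | .plus n _ _ => n
  | .stepC n _ _ _ => n
  | .plusC n _ _ _ => n

/-- The leading operation set of a kind. -/
def LKind.firstOps : LKind N O → Set O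
  | .step _ o _ => o
  | .plus _ o _ => o
  | .stepC _ o _ _ => o
  | .plusC _ o _ _ => o

section Aux

variable {N O : Type}

lemma InfPath.ext' {S A : Type} {v v' : InfPath S A}
    (hs : v.state = v'.state) (ha : v.act = v'.act) : v = v' := by
  cases v; cases v'; simp_all

lemma states_length {S A : Type} (w : FinPath S A) :
    w.states.length = w.rest.length + 1 := by
  simp [FinPath.states]

lemma drop_one {S A : Type} (s : S) (a : A) (s' : S) (r : List (A × S)) :
    (FinPath.mk s ((a, s') :: r)).drop 1 = ⟨s', r⟩ := by
  simp [FinPath.drop]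

lemma drop_states {S A : Type} :
    ∀ (k : ℕ) (w : FinPath S A), k ≤ w.rest.length →
      (w.drop k).states = w.states.drop k
  | 0, w, _ => by simp [FinPath.drop]
  | (k+1), ⟨s, []⟩, h => by simp at h
  | (k+1), ⟨s, (a, s') :: r⟩, h => by
      have := drop_states k ⟨s', r⟩ (by simpa using h)
      simpa [FinPath.drop, FinPath.states] using this

lemma drop_rest {S A : Type} :
    ∀ (k : ℕ) (w : FinPath S A), k ≤ w.rest.length →
      (w.drop k).rest = w.rest.drop k
  | 0, w, _ => by simp [FinPath.drop]
  | (k+1), ⟨s, []⟩, h => by simp at h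
  | (k+1), ⟨s, (a, s') :: r⟩, h => by
      have := drop_rest k ⟨s', r⟩ (by simpa using h)
      simpa [FinPath.drop] using this

lemma drop_first {S A : Type} (k : ℕ) (w : FinPath S A) (h : k ≤ w.rest.length) :
    w.states[k]? = some (w.drop k).first := by
  have h1 : (w.drop k).states = w.states.drop k := drop_states k w h
  have h2 : ((w.drop k).states)[0]? = some (w.drop k).first := by
    simp [FinPath.states]
  rw [h1] at h2
  simpa using h2

lemma fdrop_drop {S A : Type} (k : ℕ) (w : FinPath S A) :
    w.drop (k + 1) = (w.drop 1).drop k := by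
  rcases w with ⟨s, r⟩
  rcases r with _ | ⟨⟨a, s'⟩, r⟩
  · induction k with
    | zero => simp [FinPath.drop]
    | succ k ih => simp [FinPath.drop] at ih ⊢
  · simp [FinPath.drop]

lemma idrop_drop {S A : Type} (k j : ℕ) (v : InfPath S A) :
    (v.drop j).drop k = v.drop (k + j) := by
  apply InfPath.ext' <;> funext i <;> simp [InfPath.drop, Nat.add_assoc]

@[simp] lemma appendSink_state (w : FinPath N O) (ops : ℕ → O) (i : ℕ) :
    (appendSink w ops).state i = w.states[i]? := rfl

lemma appendSink_state_zero (w : FinPath N O) (ops : ℕ → O) :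
    (appendSink w ops).state 0 = some w.first := by
  simp [FinPath.states]

lemma appendSink_act (w : FinPath N O) (ops : ℕ → O) (i : ℕ) :
    (appendSink w ops).act i =
      if h : i < w.rest.length then (w.rest.get ⟨i, h⟩).1 else ops i := rfl

lemma appendSink_drop (k : ℕ) (w : FinPath N O) (ops : ℕ → O)
    (h : k ≤ w.rest.length) :
    (appendSink w ops).drop k = appendSink (w.drop k) (fun i => ops (i + k)) := by
  apply InfPath.ext'
  · funext i
    simp only [InfPath.drop, appendSink_state, drop_states k w h]
    simp [Nat.add_comm]
  · funext i
    simp only [InfPath.drop, appendSink_act, drop_rest k w h]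
    rcases Nat.lt_or_ge (i + k) w.rest.length with hlt | hge
    · rw [dif_pos hlt, dif_pos (by simp [List.length_drop]; omega)]
      simp only [List.get_eq_getElem, drop_rest k w h, List.getElem_drop]
      congr 2
      omega
    · rw [dif_neg (by omega), dif_neg (by simp [List.length_drop]; omega)]

section Aux2

variable {N O : Type} {I : IFD N O}

lemma mem_labelι_inl {q : NodePat N} {x : Option N} :
    Sum.inl q ∈ labelι I x ↔ ∃ s, x = some s ∧ NodePat.mat I q s := by
  cases x <;> simp [labelι]

lemma mem_labelι_inr {x : Option N} :
    Sum.inr () ∈ labelι I x ↔ x = none := by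
  cases x <;> simp [labelι]

lemma isat_atom_inl {q : NodePat N} {v : InfPath (Option N) O} :
    ISat (labelι I) (.atom (Sum.inl q)) v ↔
      ∃ s, v.state 0 = some s ∧ NodePat.mat I q s := by
  show Sum.inl q ∈ labelι I (v.state 0) ↔ _
  cases h : v.state 0 <;> simp [labelι]

lemma isat_atom_inr {v : InfPath (Option N) O} :
    ISat (labelι I) (.atom (Sum.inr ())) v ↔ v.state 0 = none := by
  show Sum.inr () ∈ labelι I (v.state 0) ↔ _
  cases h : v.state 0 <;> simp [labelι]

lemma isat_first {P : LKind N O} {v : InfPath (Option N) O}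
    (h : ISat (labelι I) (encι P) v) :
    ∃ s, v.state 0 = some s ∧ NodePat.mat I P.firstNode s := by
  cases P <;> exact isat_atom_inl.mp h.1

lemma fsat_not_next_tt {w : FinPath N O} :
    FSat (labelOf I) (.not (.next .tt)) w ↔ w.rest = [] := by
  rcases h : w.rest with _ | ⟨⟨a, s⟩, r⟩ <;> simp [FSat, h]

lemma transfer (P : LKind N O) :
    ∀ (w : FinPath N O) (ops : ℕ → O),
      FSat (labelOf I) (encK P) w ↔ ISat (labelι I) (encι P) (appendSink w ops) := by
  induction P with
  | step n o n' =>
      intro w ops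
      rcases w with ⟨s₀, r⟩
      rcases r with _ | ⟨⟨a, s₁⟩, r⟩
      · simp [FSat, ISat, encK, encι, labelOf, labelι, InfPath.drop,
          FinPath.states, appendSink]
      · rcases r with _ | ⟨⟨b, s₂⟩, r⟩
        · simp [FSat, ISat, encK, encι, labelOf, labelι, InfPath.drop,
            FinPath.states, appendSink]
        · simp [FSat, ISat, encK, encι, labelOf, labelι, InfPath.drop,
            FinPath.states, appendSink]
  | plus n o n' =>
      intro w ops
      rcases w with ⟨s₀, rest⟩
      rcases rest with _ | ⟨⟨a, s₁⟩, r⟩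
      · simp only [encK, encι, FSat, ISat]
        constructor
        · rintro ⟨-, ⟨a, s, rr, h, -⟩, -⟩; simp at h
        · rintro ⟨-, -, k, hk, -⟩
          obtain ⟨h1, -⟩ := hk
          simp [InfPath.drop, appendSink, FinPath.states, labelι] at h1
      · have hst : ∀ i, (appendSink (⟨s₀, (a, s₁) :: r⟩ : FinPath N O) ops).state i
            = (s₀ :: s₁ :: r.map Prod.snd)[i]? := fun i => by simp [FinPath.states]
        have hact : ∀ j (hj : j < r.length + 1),
            (appendSink (⟨s₀, (a, s₁) :: r⟩ : FinPath N O) ops).act j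
              = (((a, s₁) :: r).get ⟨j, hj⟩).1 := fun j hj => by
          rw [appendSink_act]
          rw [dif_pos (by simpa using hj)]
        constructor
        · intro h
          simp only [encK, FSat, labelOf, Set.mem_setOf_eq] at h
          obtain ⟨h1, ⟨a2, s2, r2, heq2, hao⟩, a3, s3, r3, heq3, k, hk, ⟨hmat, hend⟩, hbtw⟩ := h
          obtain ⟨⟨rfl, rfl⟩, rfl⟩ : (a = a2 ∧ s₁ = s2) ∧ r = r2 := by simpa using heq2
          obtain ⟨⟨rfl, rfl⟩, rfl⟩ : (a = a3 ∧ s₁ = s3) ∧ r = r3 := by simpa using heq3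
          have hrest0 : ((⟨s₁, r⟩ : FinPath N O).drop k).rest = r.drop k := drop_rest k _ hk
          have hkr : k = r.length := by
            rcases hdk : ((⟨s₁, r⟩ : FinPath N O).drop k).rest with _ | ⟨⟨b, t⟩, rr⟩
            · rw [hdk] at hrest0
              have := congrArg List.length hrest0.symm
              simp at this
              omega
            · exact absurd ⟨b, t, rr, hdk, trivial⟩ hend
          subst hkr
          simp only [encι, ISat, InfPath.drop]
          refine ⟨?_, ?_, r.length, ⟨?_, ?_⟩, ?_⟩
          · rw [hst 0]
            exact mem_labelι_inl.mpr ⟨s₀, rfl, h1⟩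
          · rw [hact 0 (by omega)]
            exact hao
          · rw [hst (0 + r.length + 1)]
            have h5 : (⟨s₁, r⟩ : FinPath N O).states[r.length]?
                = some ((⟨s₁, r⟩ : FinPath N O).drop r.length).first :=
              drop_first r.length _ le_rfl
            have h6 : (s₀ :: s₁ :: r.map Prod.snd)[0 + r.length + 1]?
                = (⟨s₁, r⟩ : FinPath N O).states[r.length]? := by
              simp [FinPath.states]
            rw [h6, h5]
            exact mem_labelι_inl.mpr ⟨_, rfl, hmat⟩
          · rw [hst (0 + 1 + r.length + 1), mem_labelι_inr]
            apply List.getElem?_eq_none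
            simp
          · intro j hj
            rw [hact (0 + j + 1) (by omega)]
            obtain ⟨b, t, rr, hbt, hbo⟩ := hbtw j hj
            rw [drop_rest j _ (le_of_lt hj)] at hbt
            have : r[j]? = some (b, t) := by
              have := congrArg (fun l => l[0]?) hbt
              simpa using this
            have hjr : j < r.length := hj
            have : r[j] = (b, t) := by
              have h7 : r[j]? = some r[j] := List.getElem?_eq_getElem hjr
              rw [this] at h7
              exact (Option.some_inj.mp h7).symm
            simp only [List.get_eq_getElem, Nat.zero_add, List.getElem_cons_succ]
            rw [this]
            exact hbo
        · intro h
          simp only [encι, ISat, InfPath.drop] at h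
          obtain ⟨h1, h2, k, ⟨hm, he⟩, hbtw⟩ := h
          rw [hst 0, mem_labelι_inl] at h1
          obtain ⟨s', hs', h1⟩ := h1
          have hs0 : s' = s₀ := by simpa using hs'.symm
          rw [hs0] at h1
          rw [hst (0 + k + 1), mem_labelι_inl] at hm
          obtain ⟨t, ht, hmt⟩ := hm
          rw [hst (0 + 1 + k + 1), mem_labelι_inr] at he
          have hkle : k ≤ r.length := by
            by_contra hcon
            rw [List.getElem?_eq_none (by simp; omega)] at ht
            exact nomatch ht
          have hkge : r.length ≤ k := by
            by_contra hcon
            rw [List.getElem?_eq_getElem (by simp; omega)] at he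
            exact nomatch he
          have hkr : k = r.length := le_antisymm hkle hkge
          subst hkr
          rw [hact 0 (by omega)] at h2
          simp only [encK, FSat, labelOf, Set.mem_setOf_eq]
          refine ⟨h1, ⟨a, s₁, r, rfl, h2⟩, a, s₁, r, rfl, r.length, le_rfl, ⟨?_, ?_⟩, ?_⟩
          · have h5 : (⟨s₁, r⟩ : FinPath N O).states[r.length]?
                = some ((⟨s₁, r⟩ : FinPath N O).drop r.length).first :=
              drop_first r.length _ le_rfl
            have h6 : (s₀ :: s₁ :: r.map Prod.snd)[0 + r.length + 1]?
                = (⟨s₁, r⟩ : FinPath N O).states[r.length]? := by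
              simp [FinPath.states]
            rw [h6, h5] at ht
            have := Option.some_inj.mp ht
            rw [this]
            exact hmt
          · rw [drop_rest r.length _ le_rfl]
            simp
          · intro j hj
            have hbo := hbtw j hj
            rw [hact (0 + j + 1) (by omega)] at hbo
            refine ⟨(r.get ⟨j, hj⟩).1, (r.get ⟨j, hj⟩).2, r.drop (j + 1), ?_, ?_⟩
            · rw [drop_rest j _ (le_of_lt hj), List.drop_eq_getElem_cons hj]
              simp
            · simpa using hbo
  | stepC n o n'' P ih =>
      intro w ops
      rcases w with ⟨s₀, r⟩
      rcases r with _ | ⟨⟨a, s₁⟩, r⟩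
      · simp only [encK, encι, FSat, ISat]
        constructor
        · rintro ⟨-, ⟨a, s, r, h, -⟩, -⟩; simp at h
        · rintro ⟨-, -, h⟩
          obtain ⟨s, hs, -⟩ := isat_first h
          simp [InfPath.drop, appendSink, FinPath.states] at hs
      · have hd : (appendSink ⟨s₀, (a, s₁) :: r⟩ ops).drop 1
            = appendSink ⟨s₁, r⟩ (fun i => ops (i + 1)) := by
          have := appendSink_drop 1 ⟨s₀, (a, s₁) :: r⟩ ops (by simp)
          simpa [drop_one] using this
        have hv1 : ISat (labelι I) (encι P) ((appendSink ⟨s₀, (a, s₁) :: r⟩ ops).drop 1)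
            ↔ FSat (labelOf I) (encK P) ⟨s₁, r⟩ := by
          rw [hd]; exact (ih _ _).symm
        simp [encK, encι, FSat, ISat, labelOf, labelι, hv1, appendSink_act,
          FinPath.states]
  | plusC n o n'' P ih =>
      intro w ops
      rcases w with ⟨s₀, rest⟩
      rcases rest with _ | ⟨⟨a, s₁⟩, r⟩
      · simp only [encK, encι, FSat, ISat]
        constructor
        · rintro ⟨-, ⟨a, s, rr, h, -⟩, -⟩; simp at h
        · rintro ⟨-, -, k, hk, -⟩
          obtain ⟨s, hs, -⟩ := isat_first hk
          simp [InfPath.drop, appendSink, FinPath.states] at hs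
      · have hst : ∀ i, (appendSink (⟨s₀, (a, s₁) :: r⟩ : FinPath N O) ops).state i
            = (s₀ :: s₁ :: r.map Prod.snd)[i]? := fun i => by simp [FinPath.states]
        have hact : ∀ j (hj : j < r.length + 1),
            (appendSink (⟨s₀, (a, s₁) :: r⟩ : FinPath N O) ops).act j
              = (((a, s₁) :: r).get ⟨j, hj⟩).1 := fun j hj => by
          rw [appendSink_act]
          rw [dif_pos (by simpa using hj)]
        have hE : ∀ k, k ≤ r.length →
            ((appendSink (⟨s₀, (a, s₁) :: r⟩ : FinPath N O) ops).drop 1).drop k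
              = appendSink ((⟨s₁, r⟩ : FinPath N O).drop k) (fun i => ops (i + (k + 1))) := by
          intro k hk
          rw [idrop_drop]
          have h8 := appendSink_drop (k + 1) ⟨s₀, (a, s₁) :: r⟩ ops (by simp; omega)
          rw [h8, fdrop_drop, drop_one]
        constructor
        · intro h
          simp only [encK, FSat, labelOf, Set.mem_setOf_eq] at h
          obtain ⟨h1, ⟨a2, s2, r2, heq2, hao⟩, a3, s3, r3, heq3, k, hk, hP, hbtw⟩ := h
          obtain ⟨⟨rfl, rfl⟩, rfl⟩ : (a = a2 ∧ s₁ = s2) ∧ r = r2 := by simpa using heq2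
          obtain ⟨⟨rfl, rfl⟩, rfl⟩ : (a = a3 ∧ s₁ = s3) ∧ r = r3 := by simpa using heq3
          simp only [encι, ISat]
          refine ⟨?_, ?_, k, ?_, ?_⟩
          · rw [hst 0]
            exact mem_labelι_inl.mpr ⟨s₀, rfl, h1⟩
          · rw [hact 0 (by omega)]
            exact hao
          · rw [hE k hk]
            exact (ih _ _).mp hP
          · intro j hj
            have hj' : j < r.length := lt_of_lt_of_le hj hk
            have h9 : (((appendSink (⟨s₀, (a, s₁) :: r⟩ : FinPath N O) ops).drop 1).drop j).act 0
                = (appendSink (⟨s₀, (a, s₁) :: r⟩ : FinPath N O) ops).act (0 + j + 1) := by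
              simp [InfPath.drop]
            rw [h9, hact (0 + j + 1) (by omega)]
            obtain ⟨b, t, rr, hbt, hbo⟩ := hbtw j hj
            rw [drop_rest j _ (le_of_lt hj')] at hbt
            have h10 : r[j]? = some (b, t) := by
              have := congrArg (fun l => l[0]?) hbt
              simpa using this
            have h11 : r[j] = (b, t) := by
              have h7 : r[j]? = some r[j] := List.getElem?_eq_getElem hj'
              rw [h10] at h7
              exact (Option.some_inj.mp h7).symm
            simp only [List.get_eq_getElem, Nat.zero_add, List.getElem_cons_succ]
            rw [h11]
            exact hbo
        · intro h
          simp only [encι, ISat] at h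
          obtain ⟨h1, h2, k, hP, hbtw⟩ := h
          rw [hst 0, mem_labelι_inl] at h1
          obtain ⟨s', hs', h1⟩ := h1
          have hs0 : s' = s₀ := by simpa using hs'.symm
          rw [hs0] at h1
          obtain ⟨t, ht, -⟩ := isat_first hP
          have ht' : (s₀ :: s₁ :: r.map Prod.snd)[0 + k + 1]? = some t := by
            have h9 : (((appendSink (⟨s₀, (a, s₁) :: r⟩ : FinPath N O) ops).drop 1).drop k).state 0
                = (appendSink (⟨s₀, (a, s₁) :: r⟩ : FinPath N O) ops).state (0 + k + 1) := by
              simp [InfPath.drop]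
            rw [h9, hst (0 + k + 1)] at ht
            exact ht
          have hk : k ≤ r.length := by
            by_contra hcon
            rw [List.getElem?_eq_none (by simp; omega)] at ht'
            exact nomatch ht'
          rw [hE k hk] at hP
          have hPf := (ih _ _).mpr hP
          rw [hact 0 (by omega)] at h2
          simp only [encK, FSat, labelOf, Set.mem_setOf_eq]
          refine ⟨h1, ⟨a, s₁, r, rfl, h2⟩, a, s₁, r, rfl, k, hk, hPf, ?_⟩
          intro j hj
          have hj' : j < r.length := lt_of_lt_of_le hj hk
          have hbo := hbtw j hj
          have h9 : (((appendSink (⟨s₀, (a, s₁) :: r⟩ : FinPath N O) ops).drop 1).drop j).act 0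
              = (appendSink (⟨s₀, (a, s₁) :: r⟩ : FinPath N O) ops).act (0 + j + 1) := by
            simp [InfPath.drop]
          rw [h9, hact (0 + j + 1) (by omega)] at hbo
          refine ⟨(r.get ⟨j, hj'⟩).1, (r.get ⟨j, hj'⟩).2, r.drop (j + 1), ?_, ?_⟩
          · rw [drop_rest j _ (le_of_lt hj'), List.drop_eq_getElem_cons hj']
            simp
          · simpa using hbo

lemma ktsRest_get :
    ∀ (s : N) (l : List (O × N)), ktsRest I s l →
      ∀ (i : ℕ) (h : i < l.length),
        ktsStep I ((s :: l.map Prod.snd)[i]'(by simp; omega)) (l[i]'h).1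
          ((s :: l.map Prod.snd)[i + 1]'(by simp; omega))
  | s, [], _, i, h => absurd h (by simp)
  | s, (op, s') :: l, hkr, 0, h => by
      obtain ⟨h1, -⟩ := hkr
      simpa using h1
  | s, (op, s') :: l, hkr, (i + 1), h => by
      obtain ⟨-, h2⟩ := hkr
      have := ktsRest_get s' l h2 i (by simpa using h)
      simpa using this

lemma kιpath_appendSink {w : FinPath N O} (hw : KTSPath I w) (ops : ℕ → O) :
    KιPath I (appendSink w ops) := by
  intro i
  rcases Nat.lt_or_ge i w.rest.length with h | h
  · have e1 : (appendSink w ops).state i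
        = some (w.states[i]'(by rw [states_length]; omega)) := by
      simp [List.getElem?_eq_getElem]
    have e2 : (appendSink w ops).state (i + 1)
        = some (w.states[i + 1]'(by rw [states_length]; omega)) := by
      simp [List.getElem?_eq_getElem]
    have e3 : (appendSink w ops).act i = (w.rest[i]'h).1 := by
      rw [appendSink_act, dif_pos h]
      simp
    rw [e1, e2, e3]
    show ktsStep I _ _ _
    have hstates : w.states = w.first :: w.rest.map Prod.snd := rfl
    have := ktsRest_get w.first w.rest hw i h
    simp_rw [← hstates] at this
    exact this
  · have e2 : (appendSink w ops).state (i + 1) = none := by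
      simp only [appendSink_state]
      apply List.getElem?_eq_none
      rw [states_length]
      omega
    rw [e2]
    rcases hx : (appendSink w ops).state i with _ | x <;> simp [sinkStep]

lemma sink_stays {v : InfPath (Option N) O} (hv : KιPath I v) (i : ℕ) :
    ∀ j, v.state i = none → v.state (i + j) = none := by
  intro j
  induction j with
  | zero => exact id
  | succ j ih =>
      intro h
      have hstep := hv (i + j)
      rcases hst : v.state (i + j + 1) with _ | s
      · rfl
      · rw [ih h, hst] at hstep
        simp [sinkStep] at hstep

lemma exists_fin : ∀ (m : ℕ) (v : InfPath (Option N) O), KιPath I v →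
    (∃ s₀, v.state 0 = some s₀) → v.state m = none →
    ∃ w : FinPath N O, KTSPath I w ∧ v = appendSink w v.act := by
  intro m
  induction m with
  | zero =>
      rintro v _ ⟨s₀, h0⟩ hm
      rw [h0] at hm
      exact nomatch hm
  | succ m ih =>
      rintro v hv ⟨s₀, h0⟩ hm
      rcases h1 : v.state 1 with _ | s₁
      · refine ⟨⟨s₀, []⟩, trivial, ?_⟩
        apply InfPath.ext'
        · funext i
          rcases i with _ | i
          · simpa [FinPath.states] using h0
          · have hn : v.state (i + 1) = none := by
              rw [show i + 1 = 1 + i from by omega]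
              exact sink_stays hv 1 i h1
            simpa [FinPath.states] using hn
        · funext i
          rw [appendSink_act]
          simp
      · have hv1 : KιPath I (v.drop 1) := by
          intro i
          have := hv (i + 1)
          simpa [InfPath.drop] using this
        obtain ⟨w', hw', heq⟩ := ih (v.drop 1) hv1 ⟨s₁, by simpa [InfPath.drop] using h1⟩
          (by simpa [InfPath.drop] using hm)
        have hstate : ∀ i, v.state (i + 1) = w'.states[i]? := by
          intro i
          have := congrArg (fun u => u.state i) heq
          simpa [InfPath.drop] using this
        have hactw : ∀ i (hi : i < w'.rest.length), v.act (i + 1) = (w'.rest[i]'hi).1 := by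
          intro i hi
          have := congrArg (fun u => u.act i) heq
          simp only [InfPath.drop, appendSink_act] at this
          rw [dif_pos hi] at this
          simpa using this
        have hfirst : w'.first = s₁ := by
          have h2 := hstate 0
          rw [h1] at h2
          have : w'.states[0]? = some w'.first := by simp [FinPath.states]
          rw [this] at h2
          exact (Option.some_inj.mp h2).symm
        refine ⟨⟨s₀, (v.act 0, s₁) :: w'.rest⟩, ?_, ?_⟩
        · refine ⟨?_, ?_⟩
          · have hstep := hv 0
            rw [h0, h1] at hstep
            exact hstep
          · rw [← hfirst]
            exact hw'
        · apply InfPath.ext'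
          · funext i
            rcases i with _ | i
            · simpa [FinPath.states] using h0
            · have h3 := hstate i
              have h4 : ((appendSink (⟨s₀, (v.act 0, s₁) :: w'.rest⟩ : FinPath N O) v.act).state (i + 1))
                  = w'.states[i]? := by
                simp [FinPath.states, hfirst]
              rw [h4]
              exact h3
          · funext i
            rcases i with _ | i
            · rw [appendSink_act]
              simp
            · rw [appendSink_act]
              by_cases hi : i < w'.rest.length
              · rw [dif_pos (by simpa using Nat.succ_lt_succ hi)]
                have h5 := hactw i hi
                simp only [List.get_eq_getElem, List.getElem_cons_succ]
                exact h5
              · rw [dif_neg (by simp; omega)]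

lemma exists_none : ∀ (P : LKind N O) (v : InfPath (Option N) O),
    ISat (labelι I) (encι P) v → ∃ m, v.state m = none := by
  intro P
  induction P with
  | step n o n' =>
      intro v h
      simp only [encι, ISat] at h
      obtain ⟨-, -, -, h2⟩ := h
      rw [mem_labelι_inr] at h2
      exact ⟨2, by simpa [InfPath.drop] using h2⟩
  | plus n o n' =>
      intro v h
      simp only [encι, ISat] at h
      obtain ⟨-, -, k, ⟨-, h2⟩, -⟩ := h
      rw [mem_labelι_inr] at h2
      exact ⟨k + 2, by simpa [InfPath.drop, show ∀ k, 0 + 1 + k + 1 = k + 2 from by omega] using h2⟩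
  | stepC n o n'' P ih =>
      intro v h
      simp only [encι, ISat] at h
      obtain ⟨m, hm⟩ := ih _ h.2.2
      exact ⟨m + 1, by simpa [InfPath.drop] using hm⟩
  | plusC n o n'' P ih =>
      intro v h
      simp only [encι, ISat] at h
      obtain ⟨-, -, k, hP, -⟩ := h
      obtain ⟨m, hm⟩ := ih _ hP
      exact ⟨m + k + 1, by simpa [InfPath.drop] using hm⟩

lemma fsat_exists_act {P : LKind N O} {w : FinPath N O}
    (h : FSat (labelOf I) (encK P) w) : ∃ (a : O) (s : N) (r : List (O × N)), w.rest = (a, s) :: r := by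
  cases P <;>
    · simp only [encK, FSat] at h
      obtain ⟨-, ⟨a, s, r, hr, -⟩, -⟩ := h
      exact ⟨a, s, r, hr⟩

end Aux2

/-- `K ⊨_l ¬enc(P)` over all finite paths of `K` iff
`K_ι ⊨_l ¬enc_ι(P)` over all infinite paths of `K_ι`. -/
theorem neg_fin_iff_sink {N O : Type} (I : IFD N O) (P : LKind N O) :
    KModels I (.not (encK P)) ↔ KιModels I (.not (encι P)) := by
  constructor
  · intro h v hv hsat
    obtain ⟨s₀, h0, -⟩ := isat_first hsat
    obtain ⟨m, hm⟩ := exists_none P v hsat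
    obtain ⟨w, hw, heq⟩ := exists_fin m v hv ⟨s₀, h0⟩ hm
    rw [heq] at hsat
    exact h w hw ((transfer P w v.act).mpr hsat)
  · intro h w hw hsat
    obtain ⟨a, s, r, -⟩ := fsat_exists_act hsat
    exact h (appendSink w (fun _ => a)) (kιpath_appendSink hw _)
      ((transfer P w (fun _ => a)).mp hsat)
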